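/- For each B ∈ (0, B̄): the function x ↦ F₁(B,x) is strictly increasing on (−∞,a), satisfies F₁(B,a) = B > 0, and tends to B − B̄ < 0 as x → −∞; consequently there exists a unique x₁(B) ∈ (−∞,a) with F₁(B, x₁(B)) = 0, and for every A ∈ ℝ the point x₁(B) is the unique minimizer of g_{A,B} on (−∞, a). -/

import Mathlib

open MeasureTheory Set Filter Topology

noncomputable def gfun (μ σ a : ℝ) (h : ℝ → ℝ) (A B x : ℝ) : ℝ :=
  A - B * Real.exp (-(2 * μ / σ ^ 2) * (x - a)) -
    (2 * μ / σ ^ 2) / μ * ∫ y in a..x, h y * Real.exp (-(2 * μ / σ ^ 2) * (x - y))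

noncomputable def F1 (μ σ a : ℝ) (h : ℝ → ℝ) (B x : ℝ) : ℝ :=
  B - 1 / μ * ∫ y in a..x, deriv h y * Real.exp ((2 * μ / σ ^ 2) * (y - a))

noncomputable def Bbar (μ σ a : ℝ) (h : ℝ → ℝ) : ℝ :=
  -(1 / μ) * ∫ y in Set.Iic a, deriv h y * Real.exp ((2 * μ / σ ^ 2) * (y - a))

theorem stmt3 (μ σ a : ℝ) (h : ℝ → ℝ)
    (hμ : 0 < μ) (hσ : 0 < σ)
    (hconv : ConvexOn ℝ Set.univ h)
    (hcont : Continuous h)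
    (hnonneg : ∀ x, 0 ≤ h x)
    (ha : h a = 0)
    (hC2 : ∀ x : ℝ, x ≠ a → ContDiffAt ℝ 2 h x)
    (hneg : ∀ x, x < a → deriv h x < 0)
    (hpos : ∀ x, a < x → 0 < deriv h x)
    (hint : IntegrableOn (fun y => |deriv h y| * Real.exp ((2 * μ / σ ^ 2) * (y - a))) (Set.Iic a))
    :
    ∀ B ∈ Set.Ioo 0 (Bbar μ σ a h),
      StrictMonoOn (F1 μ σ a h B) (Set.Iio a) ∧
      F1 μ σ a h B a = B ∧
      Tendsto (F1 μ σ a h B) atBot (nhds (B - Bbar μ σ a h)) ∧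
      B - Bbar μ σ a h < 0 ∧
      ∃ x₁ ∈ Set.Iio a, F1 μ σ a h B x₁ = 0 ∧
        (∀ x ∈ Set.Iio a, F1 μ σ a h B x = 0 → x = x₁) ∧
        ∀ A : ℝ, ∀ x ∈ Set.Iio a, x ≠ x₁ →
          gfun μ σ a h A B x₁ < gfun μ σ a h A B x := by
  intro B hB
  have hσ2 : (0:ℝ) < σ ^ 2 := by positivity
  set L : ℝ := 2 * μ / σ ^ 2 with hL
  have hLpos : 0 < L := by positivity
  -- the integrand of F1
  set f : ℝ → ℝ := fun y => deriv h y * Real.exp (L * (y - a)) with hf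
  -- the integrand of the primitive Φ
  set p : ℝ → ℝ := fun y => h y * Real.exp (L * (y - a)) with hp
  have hcp : Continuous p := by
    rw [hp]; exact hcont.mul (Real.continuous_exp.comp (by continuity))
  have hmeasf : Measurable f := by
    rw [hf]
    exact (measurable_deriv h).mul (Real.continuous_exp.comp (by continuity)).measurable
  have hfint : IntegrableOn f (Set.Iic a) := by
    refine hint.mono' (hmeasf.aestronglyMeasurable) (ae_of_all _ fun y => ?_)
    rw [hf]
    simp only [Real.norm_eq_abs, abs_mul, abs_of_pos (Real.exp_pos _)]
    exact le_refl _
  have hfi : ∀ x y : ℝ, x ≤ a → y ≤ a → IntervalIntegrable f volume x y := by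
    intro x y hx hy
    rw [intervalIntegrable_iff]
    exact hfint.mono_set fun t ht => Set.mem_Iic.mpr (ht.2.trans (max_le hx hy))
  have hF1 : ∀ x, F1 μ σ a h B x = B - 1 / μ * ∫ y in a..x, f y := by
    intro x; rw [F1, hf, hL]
  -- strict monotonicity
  have hmono : StrictMonoOn (F1 μ σ a h B) (Set.Iio a) := by
    intro x hx y hy hxy
    rw [hF1, hF1]
    have hadj : (∫ t in a..x, f t) + (∫ t in x..y, f t) = ∫ t in a..y, f t :=
      intervalIntegral.integral_add_adjacent_intervals (hfi a x le_rfl hx.le)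
        (hfi x y hx.le hy.le)
    have hIneg : 0 < ∫ t in x..y, (fun t => -f t) t := by
      refine intervalIntegral.intervalIntegral_pos_of_pos_on ((hfi x y hx.le hy.le).neg) ?_ hxy
      intro t ht
      have ht' : t < a := lt_trans ht.2 hy
      have : f t < 0 := by
        rw [hf]
        exact mul_neg_of_neg_of_pos (hneg t ht') (Real.exp_pos _)
      simpa using this
    rw [intervalIntegral.integral_neg] at hIneg
    have hI : (∫ t in x..y, f t) < 0 := by linarith
    rw [← hadj, mul_add]
    have : 1 / μ * ∫ t in x..y, f t < 0 :=
      mul_neg_of_pos_of_neg (by positivity) hI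
    linarith
  have hF1a : F1 μ σ a h B a = B := by
    rw [hF1, intervalIntegral.integral_same]; ring
  -- Bbar in terms of f
  have hBbar : Bbar μ σ a h = -(1 / μ) * ∫ t in Set.Iic a, f t := by
    rw [Bbar, hf, hL]
  -- tendsto
  have htend0 : Tendsto (fun x => ∫ t in x..a, f t) atBot (𝓝 (∫ t in Set.Iic a, f t)) :=
    MeasureTheory.intervalIntegral_tendsto_integral_Iic a hfint tendsto_id
  have htendF : Tendsto (F1 μ σ a h B) atBot (𝓝 (B - Bbar μ σ a h)) := by
    have heq : ∀ x, F1 μ σ a h B x = B + 1 / μ * ∫ t in x..a, f t := by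
      intro x
      rw [hF1, intervalIntegral.integral_symm]
      ring
    have h2 : B - Bbar μ σ a h = B + 1 / μ * ∫ t in Set.Iic a, f t := by
      rw [hBbar]; ring
    rw [h2]
    exact Tendsto.congr (fun x => (heq x).symm) ((htend0.const_mul (1 / μ)).const_add B)
  have hBneg : B - Bbar μ σ a h < 0 := by
    have := hB.2; linarith
  refine ⟨hmono, hF1a, htendF, hBneg, ?_⟩
  -- existence of x₁
  obtain ⟨x0, hx0neg, hx0a⟩ : ∃ x0, F1 μ σ a h B x0 < 0 ∧ x0 < a := by
    have hev : ∀ᶠ x in atBot, F1 μ σ a h B x < 0 := htendF.eventually_lt_const hBneg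
    exact ((hev.and (eventually_lt_atBot a)).exists)
  have hFcont : ContinuousOn (F1 μ σ a h B) (Set.Icc x0 a) := by
    have hprim : ContinuousOn (fun x => ∫ t in a..x, f t) (Set.Icc x0 a) := by
      have := intervalIntegral.continuousOn_primitive_interval
        (f := f) (μ := volume) (a := a) (b := x0)
        (hfint.mono_set (by rw [Set.uIcc_of_ge hx0a.le]; exact Set.Icc_subset_Iic_self))
      rwa [Set.uIcc_of_ge hx0a.le] at this
    have : ContinuousOn (fun x => B - 1 / μ * ∫ t in a..x, f t) (Set.Icc x0 a) :=
      continuousOn_const.sub (continuousOn_const.mul hprim)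
    exact this.congr fun x _ => hF1 x
  obtain ⟨x₁, hx₁mem, hx₁eq⟩ : ∃ x₁ ∈ Set.Ioo x0 a, F1 μ σ a h B x₁ = 0 := by
    have := intermediate_value_Ioo hx0a.le hFcont
    have h0mem : (0:ℝ) ∈ Set.Ioo (F1 μ σ a h B x0) (F1 μ σ a h B a) :=
      ⟨hx0neg, by rw [hF1a]; exact hB.1⟩
    obtain ⟨x₁, hx₁, hx₁eq⟩ := this h0mem
    exact ⟨x₁, hx₁, hx₁eq⟩
  have hx₁a : x₁ < a := hx₁mem.2
  refine ⟨x₁, hx₁a, hx₁eq, ?_, ?_⟩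
  · intro x hx hxeq
    exact hmono.injOn hx hx₁a (hxeq.trans hx₁eq.symm)
  -- minimization of g
  intro A x hx hxne
  -- primitive Φ
  set Φ : ℝ → ℝ := fun x => ∫ y in a..x, p y with hΦdef
  have hgfun : ∀ x, gfun μ σ a h A B x = A - Real.exp (-L * (x - a)) * (B + L / μ * Φ x) := by
    intro x
    rw [gfun, ← hL, hΦdef, hp]
    have hptw : ∀ y, h y * Real.exp (-L * (x - y))
        = Real.exp (-L * (x - a)) * (h y * Real.exp (L * (y - a))) := by
      intro y
      rw [show -L * (x - y) = -L * (x - a) + L * (y - a) by ring, Real.exp_add]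
      ring
    rw [show (∫ y in a..x, h y * Real.exp (-L * (x - y)))
        = ∫ y in a..x, Real.exp (-L * (x - a)) * (h y * Real.exp (L * (y - a))) from
        intervalIntegral.integral_congr fun y _ => hptw y,
      intervalIntegral.integral_const_mul]
    ring
  have hΦd : ∀ x, HasDerivAt Φ (p x) x := by
    intro x
    exact intervalIntegral.integral_hasDerivAt_right (hcp.intervalIntegrable _ _)
      (hcp.stronglyMeasurableAtFilter _ _) hcp.continuousAt
  have hexp1 : ∀ x : ℝ, Real.exp (-L * (x - a)) * Real.exp (L * (x - a)) = 1 := by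
    intro x
    rw [← Real.exp_add, show -L * (x - a) + L * (x - a) = 0 by ring, Real.exp_zero]
  have hg : ∀ x, HasDerivAt (gfun μ σ a h A B)
      (L * Real.exp (-L * (x - a)) * (B + L / μ * Φ x) - L / μ * h x) x := by
    intro x
    have he : HasDerivAt (fun x => Real.exp (-L * (x - a))) (-L * Real.exp (-L * (x - a))) x := by
      have h1 : HasDerivAt (fun x : ℝ => -L * (x - a)) (-L) x := by
        simpa using ((hasDerivAt_id x).sub_const a).const_mul (-L)
      simpa [mul_comm] using h1.exp
    have h2 : HasDerivAt (fun x => B + L / μ * Φ x) (L / μ * p x) x :=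
      ((hΦd x).const_mul (L / μ)).const_add B
    have h4 := (hasDerivAt_const x A).sub (he.mul h2)
    have hfeq : gfun μ σ a h A B = fun t => A - Real.exp (-L * (t - a)) * (B + L / μ * Φ t) :=
      funext hgfun
    rw [hfeq]
    refine h4.congr_deriv ?_
    symm
    rw [hp]
    have := hexp1 x
    linear_combination (L / μ * h x) * this
  -- integration by parts identity
  have hibp : ∀ x, x < a → (∫ y in a..x, f y) = h x * Real.exp (L * (x - a)) - L * Φ x := by
    intro x hxa
    have hpd : ∀ t ∈ Set.Ioo x a, HasDerivWithinAt p (f t + L * p t) (Set.Ioi t) t := by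
      intro t ht
      have hdh : HasDerivAt h (deriv h t) t :=
        (((hC2 t (ne_of_lt ht.2)).differentiableAt (by norm_num))).hasDerivAt
      have hde : HasDerivAt (fun y => Real.exp (L * (y - a))) (L * Real.exp (L * (t - a))) t := by
        have h1 : HasDerivAt (fun y : ℝ => L * (y - a)) L t := by
          simpa using ((hasDerivAt_id t).sub_const a).const_mul L
        simpa [mul_comm] using h1.exp
      have := hdh.mul hde
      have heq : deriv h t * Real.exp (L * (t - a)) + h t * (L * Real.exp (L * (t - a)))
          = f t + L * p t := by rw [hf, hp]; ring
      rw [hp]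
      exact (heq ▸ this).hasDerivWithinAt
    have hLp : IntervalIntegrable (fun t => L * p t) volume x a :=
      (continuous_const.mul hcp).intervalIntegrable _ _
    have hsum : IntervalIntegrable (fun t => f t + L * p t) volume x a :=
      (hfi x a hxa.le le_rfl).add hLp
    have key : ∫ y in x..a, (f y + L * p y) = p a - p x :=
      intervalIntegral.integral_eq_sub_of_hasDeriv_right_of_le hxa.le
        (hcp.continuousOn) hpd hsum
    have hpa : p a = 0 := by rw [hp]; simp [ha]
    rw [intervalIntegral.integral_add (hfi x a hxa.le le_rfl) hLp, hpa] at key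
    have h1 : ∫ y in x..a, f y = -∫ y in a..x, f y := intervalIntegral.integral_symm _ _
    have h2 : ∫ y in x..a, L * p y = -(L * Φ x) := by
      rw [intervalIntegral.integral_const_mul, hΦdef,
        intervalIntegral.integral_symm]
      ring
    rw [h1, h2] at key
    have hpx : p x = h x * Real.exp (L * (x - a)) := by rw [hp]
    linarith [key, hpx.symm.le, hpx.le]
  -- derivative of g in terms of F1
  have hderivg : ∀ t, t < a →
      deriv (gfun μ σ a h A B) t = L * Real.exp (-L * (t - a)) * F1 μ σ a h B t := by
    intro t hta
    rw [(hg t).deriv, hF1, hibp t hta]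
    have := hexp1 t
    linear_combination (L / μ * h t) * this
  have hcg : ∀ s : Set ℝ, ContinuousOn (gfun μ σ a h A B) s := by
    intro s
    exact fun t _ => (hg t).differentiableAt.continuousAt.continuousWithinAt
  rcases lt_or_gt_of_ne hxne with hlt | hgt
  · -- x < x₁ : g strictly decreasing on [x, x₁]
    have hanti : StrictAntiOn (gfun μ σ a h A B) (Set.Icc x x₁) := by
      refine strictAntiOn_of_deriv_neg (convex_Icc _ _) (hcg _) ?_
      intro t ht
      rw [interior_Icc] at ht
      have hta : t < a := lt_trans ht.2 hx₁a
      rw [hderivg t hta]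
      have hF1t : F1 μ σ a h B t < 0 := by
        have := hmono (Set.mem_Iio.mpr hta) (Set.mem_Iio.mpr hx₁a) ht.2
        rw [hx₁eq] at this
        exact this
      exact mul_neg_of_pos_of_neg (by positivity) hF1t
    exact hanti (Set.mem_Icc.mpr ⟨le_rfl, hlt.le⟩) (Set.mem_Icc.mpr ⟨hlt.le, le_rfl⟩) hlt
  · -- x₁ < x : g strictly increasing on [x₁, x]
    have hmonog : StrictMonoOn (gfun μ σ a h A B) (Set.Icc x₁ x) := by
      refine strictMonoOn_of_deriv_pos (convex_Icc _ _) (hcg _) ?_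
      intro t ht
      rw [interior_Icc] at ht
      have hta : t < a := lt_trans ht.2 hx
      rw [hderivg t hta]
      have hF1t : 0 < F1 μ σ a h B t := by
        have := hmono (Set.mem_Iio.mpr hx₁a) (Set.mem_Iio.mpr hta) ht.1
        rw [hx₁eq] at this
        exact this
      exact mul_pos (by positivity) hF1t
    exact hmonog (Set.mem_Icc.mpr ⟨le_rfl, hgt.le⟩) (Set.mem_Icc.mpr ⟨hgt.le, le_rfl⟩) hgt
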